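/- Let p be an odd prime, q = p^n, χ a primitive Dirichlet character modulo q, and q̃ a divisor of q with 1 < q̃ < q. Let j, h be integers and write (j, q̃) = p^{η_j}, (h, q̃) = p^{η_h}, with η = min(η_j, η_h). If p^η ≠ q̃ and η_j = η_h = η, then K_χ(j, h; q̃) = p^{η/2}·K_χ(jh/p^{2η}; q̃/p^η), where K_χ(a,b;q̃) = q̃^{-1/2}∑*_{r mod q̃} χ(r + b(q/q̃))χ̄(r)e(ar/q̃) and K_χ(m; q̃') := K_χ(m, 1; q̃'). -/

import Mathlib

open Finset

/-- The complete exponential sum K_χ(a,b;p^s) of (3.8):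
K_χ(a,b;q̃) = q̃^{-1/2} ∑*_{r mod q̃} χ(r + b·(q/q̃)) χ̄(r) e(ar/q̃), where q = p^n. -/
noncomputable def Kchi (p n : ℕ) (χ : DirichletCharacter ℂ (p ^ n)) (a b : ℤ) (s : ℕ) : ℂ :=
  ((Real.sqrt (p ^ s) : ℂ))⁻¹ *
    ∑ r ∈ Finset.range (p ^ s),
      if Nat.Coprime r p then
        χ ((r : ZMod (p ^ n)) + (b : ZMod (p ^ n)) * (p : ZMod (p ^ n)) ^ (n - s)) *
          (starRingEnd ℂ) (χ (r : ZMod (p ^ n))) *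
          Complex.exp (2 * Real.pi * Complex.I * (a : ℂ) * (r : ℂ) / ((p : ℂ) ^ s))
      else 0

private lemma chi_mul_conj {N : ℕ} (χ : DirichletCharacter ℂ N) {u : ZMod N}
    (hu : IsUnit u) : χ u * (starRingEnd ℂ) (χ u) = 1 := by
  have h1 : ‖χ u‖ = 1 := by simpa using χ.unit_norm_eq_one hu.unit
  rw [Complex.mul_conj]
  norm_cast
  rw [Complex.normSq_eq_norm_sq, h1, one_pow]

private lemma chi_shift {p n : ℕ} (χ : DirichletCharacter ℂ (p ^ n))
    {s : ℕ} (hsn : s ≤ n) (b u v c : ZMod (p ^ n))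
    (hu : IsUnit u) (hv : IsUnit v) (hvu : v = u + (p : ZMod (p ^ n)) ^ s * c) :
    χ (v + b * (p : ZMod (p ^ n)) ^ (n - s)) * (starRingEnd ℂ) (χ v) =
      χ (u + b * (p : ZMod (p ^ n)) ^ (n - s)) * (starRingEnd ℂ) (χ u) := by
  have hzero : (p : ZMod (p ^ n)) ^ s * (p : ZMod (p ^ n)) ^ (n - s) = 0 := by
    rw [← pow_add, Nat.add_sub_cancel' hsn]
    have := ZMod.natCast_self (p ^ n)
    push_cast at this
    exact this
  have key : (v + b * (p : ZMod (p ^ n)) ^ (n - s)) * u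
      = (u + b * (p : ZMod (p ^ n)) ^ (n - s)) * v := by
    subst hvu
    linear_combination (-(b * c)) * hzero
  have h2 : χ (v + b * (p : ZMod (p ^ n)) ^ (n - s)) * χ u
      = χ (u + b * (p : ZMod (p ^ n)) ^ (n - s)) * χ v := by
    rw [← map_mul, ← map_mul, key]
  have hu1 := chi_mul_conj χ hu
  have hv1 := chi_mul_conj χ hv
  linear_combination ((starRingEnd ℂ) (χ u) * (starRingEnd ℂ) (χ v)) * h2
    - (χ (v + b * (p : ZMod (p ^ n)) ^ (n - s)) * (starRingEnd ℂ) (χ v)) * hu1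
    + (χ (u + b * (p : ZMod (p ^ n)) ^ (n - s)) * (starRingEnd ℂ) (χ u)) * hv1

private lemma exp_congr (Q : ℕ) (hQ : Q ≠ 0) (A A' : ℤ) (hd : (Q : ℤ) ∣ (A - A')) :
    Complex.exp (2 * Real.pi * Complex.I * (A : ℂ) / (Q : ℂ))
      = Complex.exp (2 * Real.pi * Complex.I * (A' : ℂ) / (Q : ℂ)) := by
  obtain ⟨k, hk⟩ := hd
  have hQ' : (Q : ℂ) ≠ 0 := Nat.cast_ne_zero.mpr hQ
  have hA : (A : ℂ) = (A' : ℂ) + (Q : ℂ) * (k : ℂ) := by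
    have : A = A' + (Q : ℤ) * k := by linarith
    exact_mod_cast congrArg (Int.cast : ℤ → ℂ) this
  rw [hA, show 2 * Real.pi * Complex.I * ((A' : ℂ) + (Q : ℂ) * k) / Q
      = 2 * Real.pi * Complex.I * (A' : ℂ) / Q + (k : ℂ) * (2 * Real.pi * Complex.I) by
    field_simp]
  rw [Complex.exp_add, Complex.exp_int_mul_two_pi_mul_I, mul_one]

private lemma sum_range_eq_sum_zmod {M : ℕ} [NeZero M] (f : ℕ → ℂ) :
    ∑ r ∈ Finset.range M, f r = ∑ x : ZMod M, f x.val := by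
  refine Finset.sum_nbij' (fun r => (r : ZMod M)) (fun x => x.val) ?_ ?_ ?_ ?_ ?_
  · intro a _; exact Finset.mem_univ _
  · intro x _; exact Finset.mem_range.mpr (ZMod.val_lt x)
  · intro a ha; exact ZMod.val_cast_of_lt (Finset.mem_range.mp ha)
  · intro x _; exact ZMod.natCast_rightInverse x
  · intro a ha; rw [ZMod.val_cast_of_lt (Finset.mem_range.mp ha)]

private lemma periodic_mod {Q : ℕ} [NeZero Q] (g : ℕ → ℂ) (hg : ∀ r t, g (r + Q * t) = g r)
    (r : ℕ) : g r = g (r % Q) := by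
  conv_lhs => rw [← Nat.mod_add_div r Q]
  rw [hg]

private lemma sum_range_mul_periodic (g : ℕ → ℂ) (a b : ℕ) (hg : ∀ r, g (r + a) = g r) :
    ∑ r ∈ Finset.range (a * b), g r = (b : ℂ) * ∑ r ∈ Finset.range a, g r := by
  have haux : ∀ t r, g (r + a * t) = g r := by
    intro t
    induction t with
    | zero => simp
    | succ t ih => intro r; rw [Nat.mul_succ, ← add_assoc, hg, ih]
  induction b with
  | zero => simp
  | succ b ih =>
      rw [Nat.mul_succ, Finset.sum_range_add, ih]
      have : ∀ x ∈ Finset.range a, g (a * b + x) = g x := by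
        intro x _; rw [add_comm, haux]
      rw [Finset.sum_congr rfl this]
      push_cast
      ring

private noncomputable def Ksummand (p n : ℕ) (χ : DirichletCharacter ℂ (p ^ n))
    (a b : ℤ) (s : ℕ) (r : ℕ) : ℂ :=
  if Nat.Coprime r p then
    χ ((r : ZMod (p ^ n)) + (b : ZMod (p ^ n)) * (p : ZMod (p ^ n)) ^ (n - s)) *
      (starRingEnd ℂ) (χ (r : ZMod (p ^ n))) *
      Complex.exp (2 * Real.pi * Complex.I * (a : ℂ) * (r : ℂ) / ((p : ℂ) ^ s))
  else 0

private lemma Ksummand_periodic (p n : ℕ) (hp : p.Prime) (χ : DirichletCharacter ℂ (p ^ n))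
    (a b : ℤ) (s : ℕ) (hs1 : 1 ≤ s) (hsn : s ≤ n) (r t : ℕ) :
    Ksummand p n χ a b s (r + p ^ s * t) = Ksummand p n χ a b s r := by
  have hdvd : p ∣ p ^ s * t := Dvd.dvd.mul_right (dvd_pow_self p (by omega)) t
  have hiff : p ∣ r + p ^ s * t ↔ p ∣ r := by
    constructor
    · intro hx
      have := Nat.dvd_sub hx hdvd
      simpa using this
    · intro hx; exact Nat.dvd_add hx hdvd
  have hco : Nat.Coprime (r + p ^ s * t) p ↔ Nat.Coprime r p := by
    rw [Nat.coprime_comm, hp.coprime_iff_not_dvd, hiff, ← hp.coprime_iff_not_dvd,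
      Nat.coprime_comm]
  unfold Ksummand
  by_cases hr : Nat.Coprime r p
  · rw [if_pos (hco.mpr hr), if_pos hr]
    have hcast : ((r + p ^ s * t : ℕ) : ZMod (p ^ n))
        = (r : ZMod (p ^ n)) + (p : ZMod (p ^ n)) ^ s * (t : ZMod (p ^ n)) := by
      push_cast; ring
    have hu : IsUnit ((r : ℕ) : ZMod (p ^ n)) :=
      (ZMod.isUnit_iff_coprime r (p ^ n)).mpr (hr.pow_right n)
    have hv : IsUnit (((r + p ^ s * t : ℕ) : ℕ) : ZMod (p ^ n)) :=
      (ZMod.isUnit_iff_coprime _ (p ^ n)).mpr ((hco.mpr hr).pow_right n)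
    have hχ := chi_shift χ hsn (b : ZMod (p ^ n)) (r : ZMod (p ^ n))
      ((r + p ^ s * t : ℕ) : ZMod (p ^ n)) (t : ZMod (p ^ n)) hu hv hcast
    rw [hχ]
    congr 1
    have e1 : 2 * Real.pi * Complex.I * (a : ℂ) * ((r + p ^ s * t : ℕ) : ℂ) / ((p : ℂ) ^ s)
        = 2 * Real.pi * Complex.I * ((a * (r + p ^ s * t) : ℤ) : ℂ) / ((p ^ s : ℕ) : ℂ) := by
      push_cast; ring
    have e2 : 2 * Real.pi * Complex.I * (a : ℂ) * (r : ℂ) / ((p : ℂ) ^ s)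
        = 2 * Real.pi * Complex.I * ((a * r : ℤ) : ℂ) / ((p ^ s : ℕ) : ℂ) := by
      push_cast; ring
    rw [e1, e2]
    exact exp_congr _ (pow_pos hp.pos s).ne' _ _ ⟨a * t, by push_cast; ring⟩
  · rw [if_neg (fun hx => hr (hco.mp hx)), if_neg hr]

private lemma Ksummand_key (p n : ℕ) (hp : p.Prime) (χ : DirichletCharacter ℂ (p ^ n))
    (s η : ℕ) (hηs : η < s) (hsn : s ≤ n)
    (j h j' h' : ℤ) (hj' : j = (p : ℤ) ^ η * j') (hh' : h = (p : ℤ) ^ η * h')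
    (c : ℕ) (hcp : Nat.Coprime c p) (hc : ((p : ℤ)) ^ s ∣ (c : ℤ) - h') (r : ℕ) :
    Ksummand p n χ j h s (c * r) = Ksummand p n χ (j' * h') 1 (s - η) r := by
  unfold Ksummand
  have hco : Nat.Coprime (c * r) p ↔ Nat.Coprime r p := by
    rw [Nat.coprime_mul_iff_left]
    exact ⟨fun hx => hx.2, fun hx => ⟨hcp, hx⟩⟩
  by_cases hr : Nat.Coprime r p
  case neg => rw [if_neg (fun hx => hr (hco.mp hx)), if_neg hr]
  rw [if_pos (hco.mpr hr), if_pos hr]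
  obtain ⟨k, hk⟩ := id hc
  have hp0 : (p : ℂ) ≠ 0 := Nat.cast_ne_zero.mpr hp.pos.ne'
  have hpn : ((p : ZMod (p ^ n))) ^ n = 0 := by
    have := ZMod.natCast_self (p ^ n)
    push_cast at this
    exact this
  have hcast : ((c * r : ℕ) : ZMod (p ^ n)) = (c : ZMod (p ^ n)) * (r : ZMod (p ^ n)) := by
    push_cast; ring
  have hcZ : (c : ZMod (p ^ n))
      = ((h' : ℤ) : ZMod (p ^ n)) + (p : ZMod (p ^ n)) ^ s * ((k : ℤ) : ZMod (p ^ n)) := by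
    have h1 : (c : ℤ) = h' + (p : ℤ) ^ s * k := by linarith
    calc (c : ZMod (p ^ n)) = (((c : ℤ)) : ZMod (p ^ n)) := by push_cast; ring
      _ = _ := by rw [h1]; push_cast; ring
  have e1 : (p : ZMod (p ^ n)) ^ η * (p : ZMod (p ^ n)) ^ (n - s)
      = (p : ZMod (p ^ n)) ^ (n - (s - η)) := by
    rw [← pow_add]; congr 1; omega
  have e2 : (p : ZMod (p ^ n)) ^ s * (p : ZMod (p ^ n)) ^ (n - (s - η)) = 0 := by
    rw [← pow_add, show s + (n - (s - η)) = η + n by omega, pow_add, hpn, mul_zero]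
  have harg : (h : ZMod (p ^ n)) * (p : ZMod (p ^ n)) ^ (n - s)
      = (c : ZMod (p ^ n)) * (p : ZMod (p ^ n)) ^ (n - (s - η)) := by
    have hh2 : (h : ZMod (p ^ n)) = (p : ZMod (p ^ n)) ^ η * ((h' : ℤ) : ZMod (p ^ n)) := by
      rw [hh']; push_cast; ring
    rw [hh2, hcZ]
    linear_combination ((h' : ℤ) : ZMod (p ^ n)) * e1 - ((k : ℤ) : ZMod (p ^ n)) * e2
  have hmul1 : ((c * r : ℕ) : ZMod (p ^ n)) + (h : ZMod (p ^ n)) * (p : ZMod (p ^ n)) ^ (n - s)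
      = (c : ZMod (p ^ n)) *
        ((r : ZMod (p ^ n)) + ((1 : ℤ) : ZMod (p ^ n)) * (p : ZMod (p ^ n)) ^ (n - (s - η))) := by
    rw [hcast, harg]; push_cast; ring
  have hcu : IsUnit ((c : ℕ) : ZMod (p ^ n)) :=
    (ZMod.isUnit_iff_coprime c (p ^ n)).mpr (hcp.pow_right n)
  have hc1 := chi_mul_conj χ hcu
  have hexp : Complex.exp (2 * Real.pi * Complex.I * (j : ℂ) * ((c * r : ℕ) : ℂ) / ((p : ℂ) ^ s))
      = Complex.exp (2 * Real.pi * Complex.I * ((j' * h' : ℤ) : ℂ) * (r : ℂ)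
          / ((p : ℂ) ^ (s - η))) := by
    have hjC : (j : ℂ) = (p : ℂ) ^ η * (j' : ℂ) := by
      rw [hj']; push_cast; ring
    have hsplit : (p : ℂ) ^ s = (p : ℂ) ^ η * (p : ℂ) ^ (s - η) := by
      rw [← pow_add]; congr 1; omega
    have hη0 : ((p : ℂ)) ^ η ≠ 0 := pow_ne_zero _ hp0
    have hQ'0 : ((p : ℂ)) ^ (s - η) ≠ 0 := pow_ne_zero _ hp0
    have eL : 2 * Real.pi * Complex.I * (j : ℂ) * ((c * r : ℕ) : ℂ) / ((p : ℂ) ^ s)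
        = 2 * Real.pi * Complex.I * ((j' * c * r : ℤ) : ℂ) / ((p ^ (s - η) : ℕ) : ℂ) := by
      rw [hjC, hsplit]; push_cast; field_simp
    have eR : 2 * Real.pi * Complex.I * ((j' * h' : ℤ) : ℂ) * (r : ℂ) / ((p : ℂ) ^ (s - η))
        = 2 * Real.pi * Complex.I * ((j' * h' * r : ℤ) : ℂ) / ((p ^ (s - η) : ℕ) : ℂ) := by
      push_cast; ring
    rw [eL, eR]
    refine exp_congr _ (pow_pos hp.pos _).ne' _ _ ?_
    have heq : (j' * c * r : ℤ) - j' * h' * r = ((c : ℤ) - h') * (j' * r) := by push_cast; ring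
    rw [heq]
    have hdv : ((p ^ (s - η) : ℕ) : ℤ) ∣ ((c : ℤ) - h') := by
      push_cast
      exact dvd_trans (pow_dvd_pow _ (by omega : s - η ≤ s)) hc
    exact hdv.mul_right _
  rw [hmul1, hcast, map_mul, map_mul, map_mul, hexp]
  linear_combination (χ ((r : ZMod (p ^ n)) + ((1 : ℤ) : ZMod (p ^ n))
      * (p : ZMod (p ^ n)) ^ (n - (s - η))) * (starRingEnd ℂ) (χ (r : ZMod (p ^ n))) *
      Complex.exp (2 * Real.pi * Complex.I * ((j' * h' : ℤ) : ℂ) * (r : ℂ)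
        / ((p : ℂ) ^ (s - η)))) * hc1

private lemma Kchi_eq (p n : ℕ) (χ : DirichletCharacter ℂ (p ^ n)) (a b : ℤ) (s : ℕ) :
    Kchi p n χ a b s =
      ((Real.sqrt (p ^ s) : ℂ))⁻¹ * ∑ r ∈ Finset.range (p ^ s), Ksummand p n χ a b s r := rfl

/-- First case of the reduction formula (4.1) of Lemma 4.1: if (j,q̃) = (h,q̃) = p^η
with p^η ≠ q̃ = p^s, then K_χ(j,h;q̃) = p^{η/2}·K_χ(jh/p^{2η}; q̃/p^η), where
K_χ(m;q̃') := K_χ(m,1;q̃'). -/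
theorem Kchi_reduction_equal_valuation
    (p n : ℕ) (hp : p.Prime) (hodd : Odd p)
    (s : ℕ) (hs1 : 1 ≤ s) (hsn : s < n)
    (χ : DirichletCharacter ℂ (p ^ n)) (hχ : χ.IsPrimitive)
    (j h : ℤ) (η : ℕ)
    (hj : Int.gcd j ((p : ℤ) ^ s) = p ^ η)
    (hh : Int.gcd h ((p : ℤ) ^ s) = p ^ η)
    (hηs : η < s) :
    Kchi p n χ j h s =
      (Real.sqrt (p ^ η) : ℂ) * Kchi p n χ ((j * h) / ((p : ℤ) ^ (2 * η))) 1 (s - η) := by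
  haveI : Fact p.Prime := ⟨hp⟩
  have hp1 : 1 < p := hp.one_lt
  haveI : NeZero (p ^ s) := ⟨(pow_pos hp.pos s).ne'⟩
  have hjd : ((p : ℤ)) ^ η ∣ j := by
    have h1 := Int.gcd_dvd_left (a := j) (b := (p : ℤ) ^ s)
    rw [hj] at h1
    exact_mod_cast h1
  obtain ⟨j', hj'⟩ := hjd
  have hhd : ((p : ℤ)) ^ η ∣ h := by
    have h1 := Int.gcd_dvd_left (a := h) (b := (p : ℤ) ^ s)
    rw [hh] at h1
    exact_mod_cast h1
  obtain ⟨h', hh'⟩ := hhd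
  have hpη1 : ¬ ((p : ℤ)) ^ (η + 1) ∣ ((p ^ η : ℕ) : ℤ) := by
    intro hd
    have h1 : (p : ℕ) ^ (η + 1) ∣ p ^ η := by exact_mod_cast hd
    have hle := Nat.le_of_dvd (pow_pos hp.pos η) h1
    have hlt : (p : ℕ) ^ η < p ^ (η + 1) := by
      have h2 := pow_pos hp.pos η
      calc (p : ℕ) ^ η = p ^ η * 1 := (mul_one _).symm
        _ < p ^ η * p := by nlinarith
        _ = p ^ (η + 1) := (pow_succ p η).symm
    omega
  have hh'p : ¬ ((p : ℤ)) ∣ h' := by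
    intro hd
    apply hpη1
    rw [← hh]
    refine Int.dvd_coe_gcd ?_ (pow_dvd_pow _ (by omega))
    rw [hh', pow_succ]
    exact mul_dvd_mul_left _ hd
  have hm : (j * h) / ((p : ℤ) ^ (2 * η)) = j' * h' := by
    have hjh : j * h = (p : ℤ) ^ (2 * η) * (j' * h') := by rw [hj', hh']; ring
    rw [hjh, Int.mul_ediv_cancel_left _ (pow_ne_zero _ (by exact_mod_cast hp.pos.ne'))]
  set c : ℕ := ((h' : ZMod (p ^ s))).val with hc_def
  have hc_cast : ((c : ℕ) : ZMod (p ^ s)) = ((h' : ℤ) : ZMod (p ^ s)) := by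
    rw [hc_def, ZMod.natCast_val, ZMod.cast_id]
  have hc_dvd : ((p : ℤ)) ^ s ∣ ((c : ℤ) - h') := by
    have h0 : (((c : ℤ) - h' : ℤ) : ZMod (p ^ s)) = 0 := by
      rw [Int.cast_sub, Int.cast_natCast, hc_cast, sub_self]
    have h1 := (ZMod.intCast_zmod_eq_zero_iff_dvd _ _).mp h0
    exact_mod_cast h1
  have hcp : Nat.Coprime c p := by
    rw [Nat.coprime_comm, hp.coprime_iff_not_dvd]
    intro hd
    apply hh'p
    have h1 : (p : ℤ) ∣ (c : ℤ) := Int.natCast_dvd_natCast.mpr hd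
    have h2 : (p : ℤ) ∣ ((c : ℤ) - h') :=
      dvd_trans (dvd_pow_self _ (by omega : s ≠ 0)) hc_dvd
    have := dvd_sub h1 h2
    simpa using this
  rw [Kchi_eq, Kchi_eq, hm]
  have hFper : ∀ r t, Ksummand p n χ j h s (r + p ^ s * t) = Ksummand p n χ j h s r :=
    Ksummand_periodic p n hp χ j h s hs1 hsn.le
  have hGper : ∀ r t, Ksummand p n χ (j' * h') 1 (s - η) (r + p ^ (s - η) * t)
      = Ksummand p n χ (j' * h') 1 (s - η) r :=
    Ksummand_periodic p n hp χ _ 1 (s - η) (by omega) (by omega)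
  have hkey : ∀ r, Ksummand p n χ j h s (c * r) = Ksummand p n χ (j' * h') 1 (s - η) r :=
    Ksummand_key p n hp χ s η hηs hsn.le j h j' h' hj' hh' c hcp hc_dvd
  have hcu : IsUnit ((c : ℕ) : ZMod (p ^ s)) :=
    (ZMod.isUnit_iff_coprime c (p ^ s)).mpr (hcp.pow_right s)
  have hD : ∑ r ∈ Finset.range (p ^ s), Ksummand p n χ j h s r
      = ∑ r ∈ Finset.range (p ^ s), Ksummand p n χ (j' * h') 1 (s - η) r := by
    rw [sum_range_eq_sum_zmod, sum_range_eq_sum_zmod]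
    have hb := Fintype.sum_bijective (fun x : ZMod (p ^ s) => (hcu.unit : ZMod (p ^ s)) * x)
      (Units.mulLeft_bijective hcu.unit)
      (fun x => Ksummand p n χ j h s (((hcu.unit : ZMod (p ^ s)) * x).val))
      (fun y => Ksummand p n χ j h s y.val) (fun x => rfl)
    rw [← hb]
    refine Finset.sum_congr rfl fun x _ => ?_
    have h1 : ((hcu.unit : ZMod (p ^ s)) * x) = ((c * x.val : ℕ) : ZMod (p ^ s)) := by
      rw [IsUnit.unit_spec, Nat.cast_mul, ZMod.natCast_rightInverse x]
    show Ksummand p n χ j h s (((hcu.unit : ZMod (p ^ s)) * x).val) = _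
    rw [h1, ZMod.val_natCast, ← periodic_mod _ hFper, hkey]
  have hsplit : p ^ s = p ^ (s - η) * p ^ η := by rw [← pow_add]; congr 1; omega
  have hE : ∑ r ∈ Finset.range (p ^ s), Ksummand p n χ (j' * h') 1 (s - η) r
      = (p : ℂ) ^ η * ∑ r ∈ Finset.range (p ^ (s - η)), Ksummand p n χ (j' * h') 1 (s - η) r := by
    rw [hsplit, sum_range_mul_periodic _ _ _ (fun r => by simpa using hGper r 1)]
    push_cast
    ring
  rw [hD, hE]
  have ha0 : Real.sqrt ((p : ℝ) ^ η) ≠ 0 := (Real.sqrt_pos.mpr (by positivity)).ne'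
  have hb0 : Real.sqrt ((p : ℝ) ^ (s - η)) ≠ 0 := (Real.sqrt_pos.mpr (by positivity)).ne'
  have hQeq : Real.sqrt ((p : ℝ) ^ s)
      = Real.sqrt ((p : ℝ) ^ η) * Real.sqrt ((p : ℝ) ^ (s - η)) := by
    rw [← Real.sqrt_mul (by positivity), ← pow_add, Nat.add_sub_cancel' hηs.le]
  have hsq : Real.sqrt ((p : ℝ) ^ η) * Real.sqrt ((p : ℝ) ^ η) = (p : ℝ) ^ η :=
    Real.mul_self_sqrt (by positivity)
  have hsc : ((Real.sqrt ((p : ℝ) ^ s) : ℝ) : ℂ)⁻¹ * (p : ℂ) ^ η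
      = ((Real.sqrt ((p : ℝ) ^ η) : ℝ) : ℂ) * (((Real.sqrt ((p : ℝ) ^ (s - η)) : ℝ) : ℂ))⁻¹ := by
    have hpC : ((p : ℂ)) ^ η
        = ((Real.sqrt ((p : ℝ) ^ η) : ℝ) : ℂ) * ((Real.sqrt ((p : ℝ) ^ η) : ℝ) : ℂ) := by
      rw [← Complex.ofReal_mul, hsq]; push_cast; ring
    rw [hQeq, hpC]
    have ha0' : ((Real.sqrt ((p : ℝ) ^ η) : ℝ) : ℂ) ≠ 0 := Complex.ofReal_ne_zero.mpr ha0
    have hb0' : ((Real.sqrt ((p : ℝ) ^ (s - η)) : ℝ) : ℂ) ≠ 0 := Complex.ofReal_ne_zero.mpr hb0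
    push_cast
    field_simp
  linear_combination (∑ r ∈ Finset.range (p ^ (s - η)), Ksummand p n χ (j' * h') 1 (s - η) r) * hsc
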